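/- For every m < 1, the derivative of the complete elliptic integral of the first kind satisfies K'(m) = (1/2) ∫₀¹ ζ² / √((1-ζ²)(1-mζ²)³) dζ. -/

import Mathlib

open MeasureTheory Metric Set intervalIntegral Interval

lemma hasDerivAt_aux (x ζ : ℝ) (hx : x < 1) (hζ0 : 0 ≤ ζ) (hζ1 : ζ < 1) :
    HasDerivAt (fun y => 1 / Real.sqrt ((1 - ζ ^ 2) * (1 - y * ζ ^ 2)))
      ((1 / 2) * (ζ ^ 2 / Real.sqrt ((1 - ζ ^ 2) * (1 - x * ζ ^ 2) ^ 3))) x := by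
  have ha : 0 < 1 - ζ ^ 2 := by nlinarith
  have hb : 0 < 1 - x * ζ ^ 2 := by nlinarith [mul_nonneg (sub_pos.mpr hx).le (sq_nonneg ζ)]
  have hab : 0 < (1 - ζ ^ 2) * (1 - x * ζ ^ 2) := mul_pos ha hb
  have h1 : HasDerivAt (fun y : ℝ => (1 - ζ ^ 2) * (1 - y * ζ ^ 2))
      ((1 - ζ ^ 2) * (-(ζ ^ 2))) x := by
    simpa using ((((hasDerivAt_id x).mul_const (ζ ^ 2)).const_sub 1).const_mul (1 - ζ ^ 2))
  have h2 := (Real.hasDerivAt_sqrt hab.ne').comp x h1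
  have hs : Real.sqrt ((1 - ζ ^ 2) * (1 - x * ζ ^ 2)) ≠ 0 :=
    (Real.sqrt_pos.mpr hab).ne'
  have h3 := h2.inv hs
  simp only [Function.comp] at h3
  simp only [one_div]
  refine h3.congr_deriv ?_
  have hsq : Real.sqrt ((1 - ζ ^ 2) * (1 - x * ζ ^ 2)) ^ 2 = (1 - ζ ^ 2) * (1 - x * ζ ^ 2) :=
    Real.sq_sqrt hab.le
  have hcube : Real.sqrt ((1 - ζ ^ 2) * (1 - x * ζ ^ 2) ^ 3)
      = Real.sqrt ((1 - ζ ^ 2) * (1 - x * ζ ^ 2)) * (1 - x * ζ ^ 2) := by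
    rw [show (1 - ζ ^ 2) * (1 - x * ζ ^ 2) ^ 3
        = ((1 - ζ ^ 2) * (1 - x * ζ ^ 2)) * (1 - x * ζ ^ 2) ^ 2 by ring,
      Real.sqrt_mul hab.le, Real.sqrt_sq hb.le]
  rw [hcube, hsq]
  field_simp

/-- The complete elliptic integral of the first kind,
`K(m) = ∫₀¹ dζ / √((1-ζ²)(1-mζ²))`, defined for `m < 1`. -/
noncomputable def ellipticK (m : ℝ) : ℝ :=
  ∫ ζ in (0:ℝ)..1, 1 / Real.sqrt ((1 - ζ ^ 2) * (1 - m * ζ ^ 2))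

/-- For every `m < 1`, `K'(m) = (1/2) ∫₀¹ ζ² / √((1-ζ²)(1-mζ²)³) dζ`. -/
theorem deriv_ellipticK (m : ℝ) (hm : m < 1) :
    deriv ellipticK m =
      (1 / 2) * ∫ ζ in (0:ℝ)..1, ζ ^ 2 / Real.sqrt ((1 - ζ ^ 2) * (1 - m * ζ ^ 2) ^ 3) := by
  set δ : ℝ := (1 - m) / 2 with hδ
  have hδ0 : 0 < δ := by simp only [hδ]; linarith
  set c : ℝ := min 1 δ with hcdef
  have hc0 : 0 < c := lt_min one_pos hδ0
  -- lower bound on 1 - x*ζ^2 for x near m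
  have hkey : ∀ x ∈ ball m δ, ∀ ζ ∈ Icc (0:ℝ) 1, c ≤ 1 - x * ζ ^ 2 := by
    intro x hx ζ hζ
    rw [mem_ball, Real.dist_eq, abs_sub_lt_iff] at hx
    have hζsq : ζ ^ 2 ≤ 1 := by nlinarith [hζ.1, hζ.2]
    rcases le_or_gt x 0 with h | h
    · have : x * ζ ^ 2 ≤ 0 := mul_nonpos_of_nonpos_of_nonneg h (sq_nonneg ζ)
      have := min_le_left 1 δ
      linarith
    · have h1 : x * ζ ^ 2 ≤ x := by
        nlinarith [mul_le_mul_of_nonneg_left hζsq h.le]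
      have h2 : x < m + δ := by linarith [hx.1]
      have := min_le_right 1 δ
      simp only [hδ] at h2 ⊢
      nlinarith
  have hx1 : ∀ x ∈ ball m δ, x < 1 := by
    intro x hx
    rw [mem_ball, Real.dist_eq, abs_sub_lt_iff] at hx
    simp only [hδ] at hx
    linarith [hx.1]
  -- measurability
  have hmeasF : ∀ x : ℝ, AEStronglyMeasurable
      (fun ζ : ℝ => 1 / Real.sqrt ((1 - ζ ^ 2) * (1 - x * ζ ^ 2)))
      (volume.restrict (Ι (0:ℝ) 1)) := by
    intro x
    apply Measurable.aestronglyMeasurable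
    exact measurable_const.div (Real.continuous_sqrt.measurable.comp
      ((measurable_const.sub (measurable_id.pow_const 2)).mul
        (measurable_const.sub ((measurable_id.pow_const 2).const_mul x))))
  have hmeasF' : AEStronglyMeasurable
      (fun ζ : ℝ => (1 / 2) * (ζ ^ 2 / Real.sqrt ((1 - ζ ^ 2) * (1 - m * ζ ^ 2) ^ 3)))
      (volume.restrict (Ι (0:ℝ) 1)) := by
    apply Measurable.aestronglyMeasurable
    exact (((measurable_id.pow_const 2).div (Real.continuous_sqrt.measurable.comp
      ((measurable_const.sub (measurable_id.pow_const 2)).mul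
        ((measurable_const.sub ((measurable_id.pow_const 2).const_mul m)).pow_const 3)))).const_mul _)
  -- integrability of the master singular bound
  have hint0 : IntervalIntegrable (fun ζ : ℝ => (Real.sqrt (1 - ζ))⁻¹) volume 0 1 := by
    have h := (intervalIntegrable_rpow' (a := (0:ℝ)) (b := 1) (r := -(1/2))
      (by norm_num)).comp_sub_left 1
    simp only [sub_zero, sub_self] at h
    apply IntervalIntegrable.mono_fun h.symm
    · exact ((Real.continuous_sqrt.measurable.comp
        (measurable_const.sub measurable_id)).inv).aestronglyMeasurable
    · filter_upwards [ae_restrict_mem measurableSet_uIoc] with ζ hζ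
      rw [uIoc_of_le (by norm_num : (0:ℝ) ≤ 1)] at hζ
      have hζ1 : ζ ≤ 1 := hζ.2
      have h10 : (0:ℝ) ≤ 1 - ζ := by linarith
      rw [Real.norm_eq_abs, Real.norm_eq_abs, Real.rpow_neg h10, Real.sqrt_eq_rpow]
  -- uniform bound for the derivative
  have h_bound : ∀ᵐ ζ : ℝ, ζ ∈ Ι (0:ℝ) 1 → ∀ x ∈ ball m δ,
      ‖(1 / 2) * (ζ ^ 2 / Real.sqrt ((1 - ζ ^ 2) * (1 - x * ζ ^ 2) ^ 3))‖
        ≤ (2 * Real.sqrt (c ^ 3))⁻¹ * (Real.sqrt (1 - ζ))⁻¹ := by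
    apply ae_of_all
    intro ζ hζ x hx
    rw [uIoc_of_le (by norm_num : (0:ℝ) ≤ 1)] at hζ
    have hζ0 : 0 < ζ := hζ.1
    have hζ1 : ζ ≤ 1 := hζ.2
    have hb := hkey x hx ζ ⟨hζ0.le, hζ1⟩
    have hbpos : 0 < 1 - x * ζ ^ 2 := lt_of_lt_of_le hc0 hb
    have ha : 0 ≤ 1 - ζ ^ 2 := by nlinarith
    have hnn : 0 ≤ (1 / 2) * (ζ ^ 2 / Real.sqrt ((1 - ζ ^ 2) * (1 - x * ζ ^ 2) ^ 3)) := by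
      positivity
    rw [Real.norm_eq_abs, abs_of_nonneg hnn]
    rcases lt_or_ge ζ 1 with hlt | hge
    · have hapos : 0 < 1 - ζ ^ 2 := by nlinarith
      have hζsq : ζ ^ 2 ≤ 1 := by nlinarith
      have hle : (1 - ζ) * c ^ 3 ≤ (1 - ζ ^ 2) * (1 - x * ζ ^ 2) ^ 3 := by
        have h1 : 1 - ζ ≤ 1 - ζ ^ 2 := by nlinarith
        have h2 : c ^ 3 ≤ (1 - x * ζ ^ 2) ^ 3 := pow_le_pow_left₀ hc0.le hb 3
        nlinarith [mul_le_mul h1 h2 (by positivity) ha]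
      have hsle : Real.sqrt ((1 - ζ) * c ^ 3)
          ≤ Real.sqrt ((1 - ζ ^ 2) * (1 - x * ζ ^ 2) ^ 3) := Real.sqrt_le_sqrt hle
      rw [Real.sqrt_mul (by linarith : (0:ℝ) ≤ 1 - ζ)] at hsle
      have h1z : 0 < Real.sqrt (1 - ζ) := Real.sqrt_pos.mpr (by linarith)
      have h2z : 0 < Real.sqrt (c ^ 3) := Real.sqrt_pos.mpr (by positivity)
      have hdle : ζ ^ 2 / Real.sqrt ((1 - ζ ^ 2) * (1 - x * ζ ^ 2) ^ 3)
          ≤ 1 / (Real.sqrt (1 - ζ) * Real.sqrt (c ^ 3)) :=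
        div_le_div₀ zero_le_one hζsq (mul_pos h1z h2z) hsle
      calc (1 / 2) * (ζ ^ 2 / Real.sqrt ((1 - ζ ^ 2) * (1 - x * ζ ^ 2) ^ 3))
          ≤ (1 / 2) * (1 / (Real.sqrt (1 - ζ) * Real.sqrt (c ^ 3))) := by
            exact mul_le_mul_of_nonneg_left hdle (by norm_num)
        _ = (2 * Real.sqrt (c ^ 3))⁻¹ * (Real.sqrt (1 - ζ))⁻¹ := by
            field_simp
    · have hζe : ζ = 1 := le_antisymm hζ1 hge
      subst hζe
      simp
  have hboundint : IntervalIntegrable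
      (fun ζ : ℝ => (2 * Real.sqrt (c ^ 3))⁻¹ * (Real.sqrt (1 - ζ))⁻¹) volume 0 1 :=
    hint0.const_mul _
  -- integrability of F m
  have hmball : m ∈ ball m δ := mem_ball_self hδ0
  have hF_int : IntervalIntegrable
      (fun ζ : ℝ => 1 / Real.sqrt ((1 - ζ ^ 2) * (1 - m * ζ ^ 2))) volume 0 1 := by
    apply IntervalIntegrable.mono_fun (hint0.const_mul (Real.sqrt c)⁻¹) (hmeasF m)
    filter_upwards [ae_restrict_mem measurableSet_uIoc] with ζ hζ
    rw [uIoc_of_le (by norm_num : (0:ℝ) ≤ 1)] at hζ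
    have hζ0 : 0 < ζ := hζ.1
    have hζ1 : ζ ≤ 1 := hζ.2
    have hb := hkey m hmball ζ ⟨hζ0.le, hζ1⟩
    have hbpos : 0 < 1 - m * ζ ^ 2 := lt_of_lt_of_le hc0 hb
    have ha : 0 ≤ 1 - ζ ^ 2 := by nlinarith
    have hnn : 0 ≤ 1 / Real.sqrt ((1 - ζ ^ 2) * (1 - m * ζ ^ 2)) := by positivity
    rw [Real.norm_eq_abs, abs_of_nonneg hnn, Real.norm_eq_abs]
    rcases lt_or_ge ζ 1 with hlt | hge
    · have hapos : 0 < 1 - ζ ^ 2 := by nlinarith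
      have hle : (1 - ζ) * c ≤ (1 - ζ ^ 2) * (1 - m * ζ ^ 2) := by
        have h1 : 1 - ζ ≤ 1 - ζ ^ 2 := by nlinarith
        nlinarith [mul_le_mul h1 hb hc0.le ha]
      have hsle : Real.sqrt ((1 - ζ) * c)
          ≤ Real.sqrt ((1 - ζ ^ 2) * (1 - m * ζ ^ 2)) := Real.sqrt_le_sqrt hle
      rw [Real.sqrt_mul (by linarith : (0:ℝ) ≤ 1 - ζ)] at hsle
      have h1z : 0 < Real.sqrt (1 - ζ) := Real.sqrt_pos.mpr (by linarith)
      have h2z : 0 < Real.sqrt c := Real.sqrt_pos.mpr hc0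
      have habs : |(Real.sqrt c)⁻¹ * (Real.sqrt (1 - ζ))⁻¹|
          = (Real.sqrt c)⁻¹ * (Real.sqrt (1 - ζ))⁻¹ := abs_of_nonneg (by positivity)
      rw [habs]
      calc 1 / Real.sqrt ((1 - ζ ^ 2) * (1 - m * ζ ^ 2))
          ≤ 1 / (Real.sqrt (1 - ζ) * Real.sqrt c) :=
            div_le_div₀ zero_le_one le_rfl (mul_pos h1z h2z) hsle
        _ = (Real.sqrt c)⁻¹ * (Real.sqrt (1 - ζ))⁻¹ := by field_simp
    · have hζe : ζ = 1 := le_antisymm hζ1 hge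
      subst hζe
      simp [abs_of_nonneg, mul_nonneg, inv_nonneg, Real.sqrt_nonneg]
  -- differentiability a.e.
  have h_diff : ∀ᵐ ζ : ℝ, ζ ∈ Ι (0:ℝ) 1 → ∀ x ∈ ball m δ,
      HasDerivAt (fun y => 1 / Real.sqrt ((1 - ζ ^ 2) * (1 - y * ζ ^ 2)))
        ((1 / 2) * (ζ ^ 2 / Real.sqrt ((1 - ζ ^ 2) * (1 - x * ζ ^ 2) ^ 3))) x := by
    apply ae_of_all
    intro ζ hζ x hx
    rw [uIoc_of_le (by norm_num : (0:ℝ) ≤ 1)] at hζ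
    rcases lt_or_ge ζ 1 with hlt | hge
    · exact hasDerivAt_aux x ζ (hx1 x hx) hζ.1.le hlt
    · have hζe : ζ = 1 := le_antisymm hζ.2 hge
      subst hζe
      simp only [one_pow, sub_self, zero_mul, Real.sqrt_zero, div_zero, mul_zero]
      exact hasDerivAt_const x 0
  -- apply differentiation under the integral sign
  have main := intervalIntegral.hasDerivAt_integral_of_dominated_loc_of_deriv_le
    (μ := volume) (a := (0:ℝ)) (b := 1)
    (F := fun x ζ => 1 / Real.sqrt ((1 - ζ ^ 2) * (1 - x * ζ ^ 2)))
    (F' := fun x ζ => (1 / 2) * (ζ ^ 2 / Real.sqrt ((1 - ζ ^ 2) * (1 - x * ζ ^ 2) ^ 3)))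
    (bound := fun ζ => (2 * Real.sqrt (c ^ 3))⁻¹ * (Real.sqrt (1 - ζ))⁻¹)
    (ball_mem_nhds m hδ0) (Filter.Eventually.of_forall fun x => hmeasF x) hF_int hmeasF'
    h_bound hboundint h_diff
  have heq : ellipticK = fun x : ℝ =>
      ∫ ζ in (0:ℝ)..1, 1 / Real.sqrt ((1 - ζ ^ 2) * (1 - x * ζ ^ 2)) := rfl
  rw [heq, main.2.deriv, ← intervalIntegral.integral_const_mul]
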